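/- arXiv:2509.02883 — 2 statements merged into one kernel-verified Lean document; each statement's English description precedes it below -/
import Mathlib

section
/- In the free group F on generators e_1, …, e_k, consider the quotient (the free Milnor group) by the normal subgroup generated by all commutators [e_i, w^{-1} e_i w] for 1 ≤ i ≤ k and all words w. In this quotient, for every generator e_i, every element w, and every integer a ≥ 1, the identity [e_i^a, w] = [e_i, w]^a holds. -/
open scoped commutatorElement

/-- The relators of the free Milnor group on `k` generators: each generator
commutes with all of its conjugates. -/
def milnorRels (k : ℕ) : Set (FreeGroup (Fin k)) :=
  {x | ∃ (i : Fin k) (w : FreeGroup (Fin k)),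
    x = ⁅FreeGroup.of i, w⁻¹ * FreeGroup.of i * w⁆}

/-- The free Milnor group: the quotient of the free group on `e_1, …, e_k` by the
normal closure of the commutators `[e_i, w⁻¹ e_i w]`. -/
abbrev FreeMilnorGroup (k : ℕ) := PresentedGroup (milnorRels k)

lemma milnor_commute_conj (k : ℕ) (i : Fin k) (g : FreeMilnorGroup k) :
    Commute (PresentedGroup.of (rels := milnorRels k) i)
      (g⁻¹ * PresentedGroup.of (rels := milnorRels k) i * g) := by
  obtain ⟨w, rfl⟩ := PresentedGroup.mk_surjective (milnorRels k) g
  rw [← commutatorElement_eq_one_iff_commute]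
  have hmem : (⁅FreeGroup.of i, w⁻¹ * FreeGroup.of i * w⁆ : FreeGroup (Fin k)) ∈
      Subgroup.normalClosure (milnorRels k) :=
    Subgroup.subset_normalClosure ⟨i, w, rfl⟩
  have : PresentedGroup.mk (milnorRels k) ⁅FreeGroup.of i, w⁻¹ * FreeGroup.of i * w⁆ = 1 :=
    (QuotientGroup.eq_one_iff _).2 hmem
  simpa [commutatorElement_def, PresentedGroup.of] using this

lemma milnor_commute_comm (k : ℕ) (i : Fin k) (w : FreeMilnorGroup k) :
    Commute (PresentedGroup.of (rels := milnorRels k) i)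
      ⁅PresentedGroup.of (rels := milnorRels k) i, w⁆ := by
  set e := PresentedGroup.of (rels := milnorRels k) i
  have h1 : Commute e (w⁻¹⁻¹ * e * w⁻¹) := milnor_commute_conj k i w⁻¹
  rw [inv_inv] at h1
  have h2 : Commute e (w * e * w⁻¹)⁻¹ := h1.inv_right
  have : ⁅e, w⁆ = e * (w * e * w⁻¹)⁻¹ := by
    simp [commutatorElement_def, mul_assoc]
  rw [this]
  exact (Commute.refl e).mul_right h2

/-- **Power identity in the free Milnor group.**
In the free Milnor group, `[e_i^a, w] = [e_i, w]^a` for every generator `e_i`,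
every element `w`, and every integer `a ≥ 1`. -/
theorem FreeMilnorGroup.commutator_pow (k : ℕ) (i : Fin k)
    (w : FreeMilnorGroup k) (a : ℕ) (ha : 1 ≤ a) :
    ⁅(PresentedGroup.of (rels := milnorRels k) i) ^ a, w⁆ =
      ⁅PresentedGroup.of (rels := milnorRels k) i, w⁆ ^ a := by
  clear ha
  set e := PresentedGroup.of (rels := milnorRels k) i
  set c := ⁅e, w⁆ with hc
  have hec : Commute e c := milnor_commute_comm k i w
  induction a with
  | zero => simp
  | succ n ih =>
    have expand : ⁅e ^ (n + 1), w⁆ = e * ⁅e ^ n, w⁆ * (w * e⁻¹ * w⁻¹) := by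
      simp only [commutatorElement_def]
      group
    rw [expand, ih]
    have h1 : e * c ^ n = c ^ n * e := (hec.pow_right n).eq
    have h2 : e * (w * e⁻¹ * w⁻¹) = c := by
      rw [hc]; simp only [commutatorElement_def]; group
    rw [h1, mul_assoc, h2, pow_succ]
end

section
/- Let X be a simplicial complex with M simplices of dimension q and N simplices of dimension q−1. Then every simplicial q-coboundary b (with real coefficients) on X can be written as b = δc for a (q−1)-cochain c with ‖c‖_∞ ≤ min{M,N} · (q+1)^(min{M,N}−1) · ‖b‖_∞. -/
set_option maxHeartbeats 1000000

section Helpers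
open Finset Matrix

lemma abs_det_le_prod_row_sums {n : Type*} [Fintype n] [DecidableEq n] (M : Matrix n n ℝ) :
    |M.det| ≤ ∏ i, ∑ j, |M i j| := by
  rw [← Matrix.det_transpose, Matrix.det_apply']
  calc |∑ σ : Equiv.Perm n, Equiv.Perm.sign σ * ∏ i, Mᵀ (σ i) i|
      ≤ ∑ σ : Equiv.Perm n, |(Equiv.Perm.sign σ : ℝ) * ∏ i, Mᵀ (σ i) i| :=
        Finset.abs_sum_le_sum_abs _ _
    _ = ∑ σ : Equiv.Perm n, ∏ i, |M i (σ i)| := by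
        refine Finset.sum_congr rfl fun σ _ => ?_
        rw [abs_mul, Finset.abs_prod]
        rcases Int.units_eq_one_or (Equiv.Perm.sign σ) with h | h <;>
          simp [h, Matrix.transpose_apply]
    _ = ∑ f ∈ (Finset.univ : Finset (Equiv.Perm n)).image (fun σ : Equiv.Perm n => ⇑σ),
          ∏ i, |M i (f i)| := by
        rw [Finset.sum_image]
        intro a _ b _ h
        exact Equiv.coe_fn_injective h
    _ ≤ ∑ f ∈ Fintype.piFinset (fun _ : n => (Finset.univ : Finset n)), ∏ i, |M i (f i)| := by
        refine Finset.sum_le_sum_of_subset_of_nonneg ?_ fun f _ _ => Finset.prod_nonneg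
          fun i _ => abs_nonneg _
        intro f _
        simp [Fintype.mem_piFinset]
    _ = ∏ i, ∑ j, |M i j| := Finset.sum_prod_piFinset (Finset.univ : Finset n) (fun i j => |M i j|)

lemma abs_det_updateCol_le {n : ℕ} (M : Matrix (Fin (n + 1)) (Fin (n + 1)) ℝ)
    (j0 : Fin (n + 1)) (bv : Fin (n + 1) → ℝ) (k B : ℝ) (hk : 0 ≤ k) (hB : 0 ≤ B)
    (hrow : ∀ i, ∑ j, |M i j| ≤ k) (hbv : ∀ i, |bv i| ≤ B) :
    |(M.updateCol j0 bv).det| ≤ (n + 1 : ℝ) * B * k ^ n := by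
  rw [Matrix.det_succ_column _ j0]
  have hminor : ∀ i : Fin (n + 1),
      (M.updateCol j0 bv).submatrix i.succAbove j0.succAbove
        = M.submatrix i.succAbove j0.succAbove := by
    intro i
    ext r c
    simp [Matrix.updateCol_apply, (Fin.succAbove_ne j0 c)]
  have hminor_bound : ∀ i : Fin (n + 1),
      |(M.submatrix i.succAbove j0.succAbove).det| ≤ k ^ n := by
    intro i
    refine (abs_det_le_prod_row_sums _).trans ?_
    have h1 : ∀ r : Fin n, ∑ c, |M.submatrix i.succAbove j0.succAbove r c| ≤ k := by
      intro r
      have h2 : ∑ c : Fin n, |M (i.succAbove r) (j0.succAbove c)|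
          = ∑ j ∈ (Finset.univ : Finset (Fin n)).image j0.succAbove,
              |M (i.succAbove r) j| := by
        rw [Finset.sum_image]
        intro a _ b _ h
        exact Fin.succAbove_right_injective h
      calc ∑ c, |M.submatrix i.succAbove j0.succAbove r c|
          = ∑ j ∈ (Finset.univ : Finset (Fin n)).image j0.succAbove,
              |M (i.succAbove r) j| := h2
        _ ≤ ∑ j, |M (i.succAbove r) j| := Finset.sum_le_sum_of_subset_of_nonneg
              (Finset.subset_univ _) (fun j _ _ => abs_nonneg _)
        _ ≤ k := hrow _
    calc ∏ r, ∑ c, |M.submatrix i.succAbove j0.succAbove r c|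
        ≤ ∏ _r : Fin n, k := Finset.prod_le_prod
          (fun r _ => Finset.sum_nonneg fun c _ => abs_nonneg _) (fun r _ => h1 r)
      _ = k ^ n := by simp
  calc |∑ i : Fin (n + 1), (-1) ^ (i + j0 : ℕ) * (M.updateCol j0 bv) i j0 *
          ((M.updateCol j0 bv).submatrix i.succAbove j0.succAbove).det|
      ≤ ∑ i : Fin (n + 1), |(-1) ^ (i + j0 : ℕ) * (M.updateCol j0 bv) i j0 *
          ((M.updateCol j0 bv).submatrix i.succAbove j0.succAbove).det| :=
        Finset.abs_sum_le_sum_abs _ _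
    _ ≤ ∑ _i : Fin (n + 1), B * k ^ n := by
        refine Finset.sum_le_sum fun i _ => ?_
        rw [hminor i, abs_mul, abs_mul]
        have h3 : |((-1 : ℝ)) ^ (i + j0 : ℕ)| = 1 := by
          rw [abs_pow, abs_neg, abs_one, one_pow]
        rw [h3, one_mul, Matrix.updateCol_self]
        exact mul_le_mul (hbv i) (hminor_bound i) (abs_nonneg _)
          hB
    _ = (n + 1 : ℝ) * B * k ^ n := by
        rw [Finset.sum_const, Finset.card_univ, Fintype.card_fin]
        push_cast
        ring

lemma abs_det_updateCol_le' {n : ℕ} (M : Matrix (Fin n) (Fin n) ℝ)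
    (j0 : Fin n) (bv : Fin n → ℝ) (k B : ℝ) (hk : 0 ≤ k) (hB : 0 ≤ B)
    (hrow : ∀ i, ∑ j, |M i j| ≤ k) (hbv : ∀ i, |bv i| ≤ B) :
    |(M.updateCol j0 bv).det| ≤ (n : ℝ) * B * k ^ (n - 1) := by
  cases n with
  | zero => exact j0.elim0
  | succ m =>
    have := abs_det_updateCol_le M j0 bv k B hk hB hrow hbv
    simpa using this

lemma bounded_solution {ι κ : Type*} [Fintype ι] [Fintype κ] [DecidableEq ι] [DecidableEq κ]
    (A : Matrix ι κ ℝ) (hAZ : ∀ i j, ∃ z : ℤ, A i j = (z : ℝ))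
    (k B : ℝ) (hk1 : 1 ≤ k) (hA1 : ∀ i, ∑ j, |A i j| ≤ k)
    (b : ι → ℝ) (hbB : ∀ i, |b i| ≤ B)
    (hsol : ∃ x, A.mulVec x = b) :
    ∃ x, A.mulVec x = b ∧ ∀ j, |x j| ≤
      (min (Fintype.card ι) (Fintype.card κ) : ℝ) *
        k ^ (min (Fintype.card ι) (Fintype.card κ) - 1) * B := by
  classical
  set m := min (Fintype.card ι) (Fintype.card κ) with hm
  have hk0 : (0 : ℝ) ≤ k := le_trans zero_le_one hk1
  -- a solution of minimal support
  have hP : ∃ n, ∃ x, A.mulVec x = b ∧ (Finset.univ.filter fun j => x j ≠ 0).card = n := by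
    obtain ⟨x, hx⟩ := hsol
    exact ⟨_, x, hx, rfl⟩
  obtain ⟨x, hx, hxcard⟩ := Nat.find_spec hP
  set S : Finset κ := Finset.univ.filter (fun j => x j ≠ 0) with hSdef
  refine ⟨x, hx, ?_⟩
  -- the columns indexed by the support are linearly independent
  set Asub : Matrix ι {j // j ∈ S} ℝ := Matrix.of fun i j => A i (j : κ) with hAsub
  have hindep : LinearIndependent ℝ (fun j : {j // j ∈ S} => Asubᵀ j) := by
    by_contra hdep
    rw [Fintype.not_linearIndependent_iff] at hdep
    obtain ⟨g, hg0, j₀, hj₀⟩ := hdep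
    set lam : κ → ℝ := fun j => if h : j ∈ S then g ⟨j, h⟩ else 0 with hlam
    have hlamS : ∀ j' : {j // j ∈ S}, lam (j' : κ) = g j' := by
      intro j'
      simp only [hlam, dif_pos j'.2]
    have hAl : A.mulVec lam = 0 := by
      funext i
      have e0 : A.mulVec lam i = ∑ j, A i j * lam j := by
        simp [Matrix.mulVec, dotProduct]
      have e1 : ∑ j ∈ S, A i j * lam j = ∑ j, A i j * lam j :=
        Finset.sum_subset (Finset.subset_univ S) (fun j _ hj => by
          simp [hlam, dif_neg hj])
      have e2 : ∑ j' : {j // j ∈ S}, A i (j' : κ) * lam (j' : κ) = ∑ j ∈ S, A i j * lam j :=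
        Finset.sum_coe_sort S (fun j => A i j * lam j)
      have e3 : ∑ j' : {j // j ∈ S}, A i (j' : κ) * lam (j' : κ) = 0 := by
        have h4 : ∑ j' : {j // j ∈ S}, g j' * (Asubᵀ j') i = 0 := by
          have h := congrFun hg0 i
          simpa [Finset.sum_apply] using h
        rw [← h4]
        refine Finset.sum_congr rfl fun j' _ => ?_
        rw [hlamS j']
        simp [hAsub, Matrix.transpose_apply, mul_comm]
      rw [e0, ← e1, ← e2, e3]
      rfl
    set t : ℝ := x (j₀ : κ) / g j₀ with ht
    set x' : κ → ℝ := x - t • lam with hx'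
    have hx'sol : A.mulVec x' = b := by
      rw [hx', Matrix.mulVec_sub, Matrix.mulVec_smul, hAl, smul_zero, sub_zero, hx]
    have hsupp : (Finset.univ.filter fun j => x' j ≠ 0) ⊆ S.erase (j₀ : κ) := by
      intro j hj
      rw [Finset.mem_filter] at hj
      rcases hj with ⟨-, hj⟩
      rw [Finset.mem_erase]
      constructor
      · intro hjj
        apply hj
        subst hjj
        have : lam (j₀ : κ) = g j₀ := hlamS j₀
        simp [hx', ht, this, div_mul_cancel₀ _ hj₀]
      · by_contra hjS
        apply hj
        have hxj : x j = 0 := by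
          by_contra hne
          exact hjS (by simp [hSdef, hne])
        have hlj : lam j = 0 := by simp [hlam, dif_neg hjS]
        simp [hx', hxj, hlj]
    have hlt : (Finset.univ.filter fun j => x' j ≠ 0).card < Nat.find hP := by
      calc (Finset.univ.filter fun j => x' j ≠ 0).card
          ≤ (S.erase (j₀ : κ)).card := Finset.card_le_card hsupp
        _ < S.card := Finset.card_erase_lt_of_mem j₀.2
        _ = Nat.find hP := hxcard
    exact Nat.find_min hP hlt ⟨x', hx'sol, rfl⟩
  -- counting
  have hrank : Asub.rank = S.card := by
    rw [Matrix.rank_eq_finrank_span_cols, show Asub.col = fun j => Asubᵀ j from rfl, finrank_span_eq_card hindep, Fintype.card_coe]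
  have hsι : S.card ≤ Fintype.card ι := by
    rw [← hrank]; exact Asub.rank_le_card_height
  have hsκ : S.card ≤ Fintype.card κ := by
    simpa using Finset.card_le_card (Finset.subset_univ S)
  have hsm : S.card ≤ m := le_min hsι hsκ
  -- rows span everything
  have hrow_span : Submodule.span ℝ (Set.range (fun i => Asub i)) = ⊤ := by
    apply Submodule.eq_top_of_finrank_eq
    rw [show (fun i => Asub i) = Asub.row from rfl, ← Matrix.rank_eq_finrank_span_row, hrank, Module.finrank_pi, Fintype.card_coe]
  obtain ⟨bset, hb_sub, hb_span, hb_ind⟩ :=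
    exists_linearIndependent ℝ (Set.range (fun i => Asub i))
  haveI : Fintype bset := ((Set.finite_range _).subset hb_sub).fintype
  have hcardb : Fintype.card bset = S.card := by
    have hfr := finrank_span_set_eq_card hb_ind
    rw [hb_span, hrow_span, finrank_top, Module.finrank_pi, Fintype.card_coe,
      Set.toFinset_card] at hfr
    exact hfr.symm
  set s := S.card with hs
  let eb : Fin s ≃ bset := (Fintype.equivFinOfCardEq hcardb).symm
  let eS : Fin s ≃ {j // j ∈ S} := (Fintype.equivFinOfCardEq (Fintype.card_coe S)).symm
  let φ : bset → ι := fun v => (hb_sub v.2).choose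
  have hφ : ∀ v : bset, Asub (φ v) = (v : {j // j ∈ S} → ℝ) :=
    fun v => (hb_sub v.2).choose_spec
  set Msq : Matrix (Fin s) (Fin s) ℝ :=
    Matrix.of fun r c => A (φ (eb r)) ((eS c) : κ) with hMsq
  have hrowsMsq : LinearIndependent ℝ (fun r : Fin s => Msq r) := by
    have heq : (fun r : Fin s => Msq r)
        = (LinearMap.funLeft ℝ ℝ ⇑eS) ∘ ((fun v : bset => (v : {j // j ∈ S} → ℝ)) ∘ eb) := by
      funext r
      funext c
      show A (φ (eb r)) ((eS c) : κ) = _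
      have := congrFun (hφ (eb r)) (eS c)
      exact this
    rw [heq]
    exact (hb_ind.comp eb eb.injective).map' (LinearMap.funLeft ℝ ℝ ⇑eS)
      (LinearMap.ker_eq_bot.mpr (LinearMap.funLeft_injective_of_surjective ℝ ℝ _ eS.surjective))
  have hdet : Msq.det ≠ 0 := by
    have hU : IsUnit Msq := Matrix.linearIndependent_rows_iff_isUnit.mp hrowsMsq
    exact ((Matrix.isUnit_iff_isUnit_det _).mp hU).ne_zero
  -- integrality : |det| ≥ 1
  set Mz : Matrix (Fin s) (Fin s) ℤ :=
    Matrix.of fun r c => (hAZ (φ (eb r)) ((eS c) : κ)).choose with hMzdef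
  have hMz : Msq = Mz.map (fun z : ℤ => (z : ℝ)) := by
    ext r c
    exact (hAZ (φ (eb r)) ((eS c) : κ)).choose_spec
  have hdet_cast : Msq.det = ((Mz.det : ℤ) : ℝ) := by
    rw [hMz]
    exact ((Int.castRingHom ℝ).map_det Mz).symm
  have hdet1 : (1 : ℝ) ≤ |Msq.det| := by
    rw [hdet_cast]
    have hz : Mz.det ≠ 0 := by
      intro h
      apply hdet
      rw [hdet_cast, h, Int.cast_zero]
    rw [← Int.cast_abs]
    exact_mod_cast Int.one_le_abs hz
  -- the restricted linear system
  set y : Fin s → ℝ := fun c => x ((eS c) : κ) with hy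
  set bT : Fin s → ℝ := fun r => b (φ (eb r)) with hbT
  have hMy : Msq.mulVec y = bT := by
    funext r
    have e0 : Msq.mulVec y r = ∑ c, A (φ (eb r)) ((eS c) : κ) * x ((eS c) : κ) := by
      simp [Matrix.mulVec, dotProduct, hMsq, hy]
    have e1 : ∑ c, A (φ (eb r)) ((eS c) : κ) * x ((eS c) : κ)
        = ∑ j' : {j // j ∈ S}, A (φ (eb r)) (j' : κ) * x (j' : κ) :=
      Equiv.sum_comp eS (fun j' => A (φ (eb r)) (j' : κ) * x (j' : κ))
    have e2 : ∑ j' : {j // j ∈ S}, A (φ (eb r)) (j' : κ) * x (j' : κ)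
        = ∑ j ∈ S, A (φ (eb r)) j * x j :=
      Finset.sum_coe_sort S (fun j => A (φ (eb r)) j * x j)
    have e3 : ∑ j ∈ S, A (φ (eb r)) j * x j = ∑ j, A (φ (eb r)) j * x j :=
      Finset.sum_subset (Finset.subset_univ S) (fun j _ hj => by
        have hxj : x j = 0 := by
          by_contra hne
          exact hj (by simp [hSdef, hne])
        simp [hxj])
    have e4 : ∑ j, A (φ (eb r)) j * x j = b (φ (eb r)) := by
      rw [← hx]
      simp [Matrix.mulVec, dotProduct]
    rw [e0, e1, e2, e3, e4]
  have hrowbound : ∀ r : Fin s, ∑ c, |Msq r c| ≤ k := by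
    intro r
    have e1 : ∑ c, |A (φ (eb r)) ((eS c) : κ)| = ∑ j' : {j // j ∈ S}, |A (φ (eb r)) (j' : κ)| :=
      Equiv.sum_comp eS (fun j' => |A (φ (eb r)) (j' : κ)|)
    have e2 : ∑ j' : {j // j ∈ S}, |A (φ (eb r)) (j' : κ)| = ∑ j ∈ S, |A (φ (eb r)) j| :=
      Finset.sum_coe_sort S (fun j => |A (φ (eb r)) j|)
    calc ∑ c, |Msq r c| = ∑ j ∈ S, |A (φ (eb r)) j| := by rw [← e2, ← e1]; rfl
      _ ≤ ∑ j, |A (φ (eb r)) j| := Finset.sum_le_sum_of_subset_of_nonneg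
          (Finset.subset_univ _) (fun j _ _ => abs_nonneg _)
      _ ≤ k := hA1 _
  -- Cramer's rule
  have hcr : ∀ c : Fin s, Msq.det * y c = (Msq.updateCol c bT).det := by
    intro c
    have h1 : Msq.det • y = Msq.adjugate.mulVec bT := by
      rw [← hMy, Matrix.mulVec_mulVec, Matrix.adjugate_mul, Matrix.smul_mulVec,
        Matrix.one_mulVec]
    have h2 := congrFun h1 c
    rw [Pi.smul_apply, smul_eq_mul] at h2
    rw [h2, ← Matrix.cramer_eq_adjugate_mulVec, Matrix.cramer_apply]
  -- conclusion
  have hgoal_eq : min ((Fintype.card ι : ℝ)) ((Fintype.card κ : ℝ)) = (m : ℝ) := by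
    rw [hm, Nat.cast_min]
  intro j
  rw [hgoal_eq]
  by_cases hj : j ∈ S
  · have hSne : 1 ≤ s := Finset.card_pos.mpr ⟨j, hj⟩
    have hιne : Nonempty ι := Fintype.card_pos_iff.mp (lt_of_lt_of_le hSne hsι)
    obtain ⟨i₀⟩ := hιne
    have hB0 : 0 ≤ B := le_trans (abs_nonneg _) (hbB i₀)
    set c : Fin s := eS.symm ⟨j, hj⟩ with hc
    have hxy : x j = y c := by
      rw [hy]
      simp [hc]
    have hyb : |y c| ≤ (s : ℝ) * B * k ^ (s - 1) := by
      have hupd := abs_det_updateCol_le' Msq c bT k B hk0 hB0 hrowbound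
        (fun r => hbB _)
      calc |y c| ≤ |Msq.det| * |y c| :=
            le_mul_of_one_le_left (abs_nonneg _) hdet1
        _ = |Msq.det * y c| := (abs_mul _ _).symm
        _ = |(Msq.updateCol c bT).det| := by rw [hcr c]
        _ ≤ (s : ℝ) * B * k ^ (s - 1) := hupd
    rw [hxy]
    refine hyb.trans ?_
    have h5 : (s : ℝ) * B * k ^ (s - 1) = (s : ℝ) * k ^ (s - 1) * B := by ring
    rw [h5]
    have h6 : (s : ℝ) * k ^ (s - 1) ≤ (m : ℝ) * k ^ (m - 1) := by
      have h7 : (s : ℝ) ≤ (m : ℝ) := Nat.cast_le.mpr hsm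
      have h8 : k ^ (s - 1) ≤ k ^ (m - 1) := pow_le_pow_right₀ hk1 (by omega)
      exact mul_le_mul h7 h8 (pow_nonneg hk0 _) (Nat.cast_nonneg _)
    exact mul_le_mul_of_nonneg_right h6 hB0
  · have hxj : x j = 0 := by
      by_contra hne
      exact hj (by simp [hSdef, hne])
    rw [hxj, abs_zero]
    rcases isEmpty_or_nonempty ι with hι | hι
    · have hm0 : m = 0 := by
        rw [hm, Fintype.card_eq_zero]
        simp
      rw [hm0]
      simp
    · obtain ⟨i₀⟩ := hι
      have hB0 : 0 ≤ B := le_trans (abs_nonneg _) (hbB i₀)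
      positivity
end Helpers


/-- The simplicial coboundary operator (with real coefficients) on an ordered
simplicial complex: for a cochain `c` on `(q-1)`-dimensional simplices and a
`q`-simplex `σ` (a finite set of `q+1` vertices), `(δc)(σ) = Σ_{v ∈ σ} (−1)^{ind(v)}
c(σ \ v)`, where `ind(v)` is the position of `v` in the ordering of `σ`. -/
noncomputable def simplicialCoboundary {V : Type*} [LinearOrder V]
    (c : Finset V → ℝ) (σ : Finset V) : ℝ :=
  ∑ v ∈ σ, (-1 : ℝ) ^ ((σ.filter fun w => w < v).card) * c (σ.erase v)

/-- **Coisoperimetric inequality for simplicial cochains** (Corollary `cor:sIP`).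
Let `X` be a simplicial complex with `M` simplices of dimension `q` and `N`
simplices of dimension `q−1`.  Every simplicial `q`-coboundary `b` with
`‖b‖_∞ ≤ B` is the coboundary of a `(q−1)`-cochain `c` with
`‖c‖_∞ ≤ min{M,N} · (q+1)^{min{M,N}−1} · B`.
(A `q`-simplex is a member of `K` of cardinality `q+1`.) -/
theorem simplicial_coboundary_bounded_primitive
    {V : Type*} [LinearOrder V] (K : Finset (Finset V))
    (hK : ∀ s ∈ K, ∀ t ⊆ s, t ∈ K) (q : ℕ) (hq : 1 ≤ q)
    (b : Finset V → ℝ) (B : ℝ)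
    (hb : ∃ c' : Finset V → ℝ, ∀ σ ∈ K, σ.card = q + 1 →
      b σ = simplicialCoboundary c' σ)
    (hB : ∀ σ ∈ K, σ.card = q + 1 → |b σ| ≤ B) :
    ∃ c : Finset V → ℝ,
      (∀ σ ∈ K, σ.card = q + 1 → b σ = simplicialCoboundary c σ) ∧
      (∀ τ ∈ K, τ.card = q →
        |c τ| ≤ (min ((K.filter fun s => s.card = q + 1).card)
                      ((K.filter fun s => s.card = q).card) : ℝ) *
                ((q : ℝ) + 1) ^ (min ((K.filter fun s => s.card = q + 1).card)
                      ((K.filter fun s => s.card = q).card) - 1) * B) := by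
    classical
  set F1 : Finset (Finset V) := K.filter fun s => s.card = q + 1 with hF1
  set F0 : Finset (Finset V) := K.filter fun s => s.card = q with hF0
  set sgn : Finset V → V → ℝ := fun σ v => (-1 : ℝ) ^ ((σ.filter fun w => w < v).card) with hsgn
  set A : Matrix {σ // σ ∈ F1} {τ // τ ∈ F0} ℝ :=
    Matrix.of fun σ τ => ∑ v ∈ (σ : Finset V),
      if (τ : Finset V) = (σ : Finset V).erase v then sgn (σ : Finset V) v else 0 with hA
  have hmem : ∀ (σ : {σ // σ ∈ F1}) (v : V), v ∈ (σ : Finset V) →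
      (σ : Finset V).erase v ∈ F0 := by
    intro σ v hv
    have hσ := Finset.mem_filter.mp σ.2
    refine Finset.mem_filter.mpr ⟨hK _ hσ.1 _ (Finset.erase_subset v _), ?_⟩
    rw [Finset.card_erase_of_mem hv, hσ.2]
    omega
  -- the matrix computes the simplicial coboundary
  have hkey : ∀ (y : {τ // τ ∈ F0} → ℝ) (c : Finset V → ℝ),
      (∀ τ : {τ // τ ∈ F0}, c (τ : Finset V) = y τ) →
      ∀ σ : {σ // σ ∈ F1}, A.mulVec y σ = simplicialCoboundary c (σ : Finset V) := by
    intro y c hyc σ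
    have e0 : A.mulVec y σ = ∑ τ : {τ // τ ∈ F0},
        (∑ v ∈ (σ : Finset V),
          if (τ : Finset V) = (σ : Finset V).erase v then sgn (σ : Finset V) v else 0) * y τ := by
      simp [Matrix.mulVec, dotProduct, hA]
    have e1 : ∀ v ∈ (σ : Finset V),
        (∑ τ : {τ // τ ∈ F0}, if (τ : Finset V) = (σ : Finset V).erase v
            then sgn (σ : Finset V) v * y τ else 0)
          = sgn (σ : Finset V) v * c ((σ : Finset V).erase v) := by
      intro v hv
      rw [Finset.sum_eq_single (⟨(σ : Finset V).erase v, hmem σ v hv⟩ : {τ // τ ∈ F0})]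
      · rw [if_pos rfl, hyc ⟨(σ : Finset V).erase v, hmem σ v hv⟩]
      · intro τ _ hτ
        rw [if_neg]
        intro hcontr
        exact hτ (Subtype.ext hcontr)
      · intro h
        exact absurd (Finset.mem_univ _) h
    calc A.mulVec y σ
        = ∑ τ : {τ // τ ∈ F0}, ∑ v ∈ (σ : Finset V),
            (if (τ : Finset V) = (σ : Finset V).erase v
              then sgn (σ : Finset V) v * y τ else 0) := by
          rw [e0]
          refine Finset.sum_congr rfl fun τ _ => ?_
          rw [Finset.sum_mul]
          refine Finset.sum_congr rfl fun v _ => ?_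
          rw [ite_mul, zero_mul]
      _ = ∑ v ∈ (σ : Finset V), ∑ τ : {τ // τ ∈ F0},
            (if (τ : Finset V) = (σ : Finset V).erase v
              then sgn (σ : Finset V) v * y τ else 0) := Finset.sum_comm
      _ = ∑ v ∈ (σ : Finset V), sgn (σ : Finset V) v * c ((σ : Finset V).erase v) :=
            Finset.sum_congr rfl e1
      _ = simplicialCoboundary c (σ : Finset V) := by
            simp [simplicialCoboundary, hsgn]
  -- integrality of the matrix
  have hAZ : ∀ σ τ, ∃ z : ℤ, A σ τ = (z : ℝ) := by
    intro σ τ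
    refine ⟨∑ v ∈ (σ : Finset V), if (τ : Finset V) = (σ : Finset V).erase v
      then (-1 : ℤ) ^ (((σ : Finset V).filter fun w => w < v).card) else 0, ?_⟩
    simp only [hA, Matrix.of_apply, hsgn]
    push_cast
    rfl
  -- row sums
  have hA1 : ∀ σ, ∑ τ, |A σ τ| ≤ (q : ℝ) + 1 := by
    intro σ
    have hσcard : (σ : Finset V).card = q + 1 := (Finset.mem_filter.mp σ.2).2
    have h1 : ∀ (v : V) (τ : {τ // τ ∈ F0}),
        |if (τ : Finset V) = (σ : Finset V).erase v then sgn (σ : Finset V) v else 0|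
          = if (τ : Finset V) = (σ : Finset V).erase v then 1 else 0 := by
      intro v τ
      split_ifs
      · rw [hsgn, abs_pow, abs_neg, abs_one, one_pow]
      · simp
    have h2 : ∀ v : V, (∑ τ : {τ // τ ∈ F0},
        if (τ : Finset V) = (σ : Finset V).erase v then (1 : ℝ) else 0) ≤ 1 := by
      intro v
      rw [Finset.sum_boole]
      have : (Finset.univ.filter fun τ : {τ // τ ∈ F0} =>
          (τ : Finset V) = (σ : Finset V).erase v).card ≤ 1 := by
        refine Finset.card_le_one.mpr fun a ha b hb => ?_
        rw [Finset.mem_filter] at ha hb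
        exact Subtype.ext (ha.2.trans hb.2.symm)
      exact_mod_cast this
    calc ∑ τ, |A σ τ|
        ≤ ∑ τ : {τ // τ ∈ F0}, ∑ v ∈ (σ : Finset V),
            |if (τ : Finset V) = (σ : Finset V).erase v then sgn (σ : Finset V) v else 0| := by
          refine Finset.sum_le_sum fun τ _ => ?_
          simp only [hA, Matrix.of_apply]
          exact Finset.abs_sum_le_sum_abs _ _
      _ = ∑ v ∈ (σ : Finset V), ∑ τ : {τ // τ ∈ F0},
            |if (τ : Finset V) = (σ : Finset V).erase v then sgn (σ : Finset V) v else 0| :=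
          Finset.sum_comm
      _ ≤ ∑ _v ∈ (σ : Finset V), (1 : ℝ) := by
          refine Finset.sum_le_sum fun v _ => ?_
          calc ∑ τ : {τ // τ ∈ F0},
              |if (τ : Finset V) = (σ : Finset V).erase v then sgn (σ : Finset V) v else 0|
              = ∑ τ : {τ // τ ∈ F0},
                (if (τ : Finset V) = (σ : Finset V).erase v then (1:ℝ) else 0) :=
                Finset.sum_congr rfl fun τ _ => h1 v τ
            _ ≤ 1 := h2 v
      _ = (q : ℝ) + 1 := by
          rw [Finset.sum_const, hσcard]
          push_cast
          ring
  -- solvability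
  obtain ⟨c', hc'⟩ := hb
  set b' : {σ // σ ∈ F1} → ℝ := fun σ => b (σ : Finset V) with hb'
  have hsolv : ∃ x, A.mulVec x = b' := by
    refine ⟨fun τ => c' (τ : Finset V), funext fun σ => ?_⟩
    have hσ := Finset.mem_filter.mp σ.2
    rw [hkey _ c' (fun τ => rfl) σ, hb']
    exact (hc' _ hσ.1 hσ.2).symm
  have hbB : ∀ σ : {σ // σ ∈ F1}, |b' σ| ≤ B := by
    intro σ
    have hσ := Finset.mem_filter.mp σ.2
    exact hB _ hσ.1 hσ.2
  obtain ⟨x, hxsol, hxbound⟩ := bounded_solution A hAZ ((q : ℝ) + 1) B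
    (by norm_num) hA1 b' hbB hsolv
  simp only [Fintype.card_coe] at hxbound
  -- the bounded primitive
  set c : Finset V → ℝ := fun t => if h : t ∈ F0 then x ⟨t, h⟩ else 0 with hc
  have hcx : ∀ τ : {τ // τ ∈ F0}, c (τ : Finset V) = x τ := by
    intro τ
    rw [hc]
    simp only [dif_pos τ.2]
  refine ⟨c, ?_, ?_⟩
  · intro σ hσK hσcard
    have hσ : σ ∈ F1 := Finset.mem_filter.mpr ⟨hσK, hσcard⟩
    have h1 := hkey x c hcx ⟨σ, hσ⟩
    have h2 := congrFun hxsol ⟨σ, hσ⟩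
    rw [← h1, h2]
  · intro τ hτK hτcard
    have hτ : τ ∈ F0 := Finset.mem_filter.mpr ⟨hτK, hτcard⟩
    have h1 : c τ = x ⟨τ, hτ⟩ := hcx ⟨τ, hτ⟩
    rw [h1]
    exact hxbound ⟨τ, hτ⟩
end
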